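/- For all integers n ≥ 1 and k ≥ 1 with 2k ≤ n + 1, the number w(n,k) of Catalan words of length n having exactly k runs of weak ascents satisfies n · w(n,k) = C(n,k) · C(n-k, k-1) · 2^{n-2k+1}; moreover w(n,k) = 0 when 2k > n + 1. -/

import Mathlib

/-- The set of Catalan words of length `n`: words `w` over ℕ with `w 1 = 0` and
`w (i+1) ≤ w i + 1` for all `i`. -/
def CatalanWord (n : ℕ) : Set (List ℕ) :=
  {w | w.length = n ∧ w.getD 0 0 = 0 ∧
    ∀ i, i + 1 < n → w.getD (i + 1) 0 ≤ w.getD i 0 + 1}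

/-- Number of runs of weak ascents of `w`: `1 + #{i : w i > w (i+1)}`. -/
def wAscRuns (w : List ℕ) : ℕ :=
  1 + ((Finset.range (w.length - 1)).filter
    (fun i => w.getD (i + 1) 0 < w.getD i 0)).card

/-- last letter of a word (0 for empty). -/
def lastD (w : List ℕ) : ℕ := w.getD (w.length - 1) 0

/-- Catalan words of length `n` as a Finset, built by appending letters. -/
def CWF : ℕ → Finset (List ℕ)
  | 0 => ∅
  | 1 => {[0]}
  | (n+2) => (CWF (n+1)).biUnion
      (fun w => (Finset.range (lastD w + 2)).image (fun j => w ++ [j]))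

lemma length_of_mem_CWF : ∀ n, ∀ w ∈ CWF n, w.length = n := by
  intro n
  induction n using Nat.strong_induction_on with
  | _ n ih =>
    match n with
    | 0 => simp [CWF]
    | 1 => intro w hw; simp only [CWF, Finset.mem_singleton] at hw; subst hw; rfl
    | (n+2) =>
      intro w hw
      simp only [CWF, Finset.mem_biUnion, Finset.mem_image, Finset.mem_range] at hw
      obtain ⟨w', hw', j, _, rfl⟩ := hw
      simp [ih (n+1) (by omega) w' hw']

lemma one_le_wAscRuns (w : List ℕ) : 1 ≤ wAscRuns w := Nat.le_add_right 1 _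

lemma lastD_append (w : List ℕ) (j : ℕ) : lastD (w ++ [j]) = j := by
  unfold lastD
  rw [List.length_append]
  simp only [List.length_singleton, Nat.add_sub_cancel]
  rw [List.getD_append_right _ _ _ _ (le_refl _)]
  simp

lemma getD_concat_lt (w : List ℕ) (j i : ℕ) (h : i < w.length) :
    (w ++ [j]).getD i 0 = w.getD i 0 := List.getD_append _ _ _ _ h

lemma getD_concat_last (w : List ℕ) (j : ℕ) :
    (w ++ [j]).getD w.length 0 = j := by
  rw [List.getD_append_right _ _ _ _ (le_refl _)]; simp

lemma wAscRuns_append (w : List ℕ) (hw : w ≠ []) (j : ℕ) :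
    wAscRuns (w ++ [j]) = wAscRuns w + (if j < lastD w then 1 else 0) := by
  obtain ⟨M, hM⟩ : ∃ M, w.length = M + 1 :=
    ⟨w.length - 1, by have := List.length_pos_iff.mpr hw; omega⟩
  unfold wAscRuns
  rw [List.length_append]
  simp only [List.length_singleton, hM, Nat.add_sub_cancel]
  rw [Finset.range_add_one, Finset.filter_insert]
  have hlast : (w ++ [j]).getD (M + 1) 0 = j := by
    have := getD_concat_last w j; rwa [hM] at this
  have hMth : (w ++ [j]).getD M 0 = lastD w := by
    rw [getD_concat_lt w j M (by omega)]; unfold lastD; rw [hM]; simp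
  have hfilter : (Finset.range M).filter
        (fun i => (w ++ [j]).getD (i + 1) 0 < (w ++ [j]).getD i 0)
      = (Finset.range M).filter (fun i => w.getD (i + 1) 0 < w.getD i 0) := by
    apply Finset.filter_congr
    intro i hi
    simp only [Finset.mem_range] at hi
    rw [getD_concat_lt w j i (by omega), getD_concat_lt w j (i+1) (by omega)]
  rw [hlast, hMth]
  by_cases hj : j < lastD w
  · rw [if_pos hj, if_pos hj, Finset.card_insert_of_notMem (by simp), hfilter]
    omega
  · rw [if_neg hj, if_neg hj, hfilter]
    omega

lemma mem_CWF_iff : ∀ n, 1 ≤ n → ∀ w, (w ∈ CWF n ↔ w ∈ CatalanWord n) := by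
  intro n hn
  induction n, hn using Nat.le_induction with
  | base =>
    intro w
    constructor
    · intro hw
      simp only [CWF, Finset.mem_singleton] at hw
      subst hw
      refine ⟨rfl, rfl, by omega⟩
    · rintro ⟨hlen, h0, -⟩
      obtain ⟨a, rfl⟩ := List.length_eq_one_iff.mp hlen
      simp only [List.getD] at h0
      simp_all [CWF]
  | succ n hn ih =>
    obtain ⟨m, rfl⟩ : ∃ m, n = m + 1 := ⟨n - 1, by omega⟩
    intro w
    constructor
    · intro hw
      simp only [CWF, Finset.mem_biUnion, Finset.mem_image, Finset.mem_range] at hw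
      obtain ⟨w', hw', j, hj, rfl⟩ := hw
      obtain ⟨hlen, h0, hstep⟩ := (ih w').mp hw'
      refine ⟨by simp [hlen], ?_, ?_⟩
      · rw [getD_concat_lt w' j 0 (by omega)]; exact h0
      · intro i hi
        rcases Nat.lt_or_ge (i + 1) (m + 1) with h | h
        · rw [getD_concat_lt w' j i (by omega), getD_concat_lt w' j (i+1) (by omega)]
          exact hstep i h
        · have hieq : i = m := by omega
          have h1 : (w' ++ [j]).getD (i + 1) 0 = j := by
            rw [hieq]
            have := getD_concat_last w' j; rwa [hlen] at this
          have h2 : (w' ++ [j]).getD i 0 = lastD w' := by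
            rw [hieq, getD_concat_lt w' j m (by omega)]; unfold lastD; rw [hlen]; simp
          rw [h1, h2]; omega
    · rintro ⟨hlen, h0, hstep⟩
      have hne : w ≠ [] := by intro h; subst h; simp at hlen
      rcases w.eq_nil_or_concat' with rfl | ⟨w', j, rfl⟩
      · exact absurd rfl hne
      have hlen' : w'.length = m + 1 := by
        simp only [List.length_append, List.length_singleton] at hlen; omega
      have hw' : w' ∈ CWF (m + 1) := by
        apply (ih w').mpr
        refine ⟨hlen', ?_, ?_⟩
        · rw [← getD_concat_lt w' j 0 (by omega)]; exact h0
        · intro i hi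
          have := hstep i (by omega)
          rwa [getD_concat_lt w' j i (by omega), getD_concat_lt w' j (i+1) (by omega)] at this
      have hj : j < lastD w' + 2 := by
        have := hstep m (by omega)
        have h1 : (w' ++ [j]).getD (m + 1) 0 = j := by
          have := getD_concat_last w' j; rwa [hlen'] at this
        have h2 : (w' ++ [j]).getD m 0 = lastD w' := by
          rw [getD_concat_lt w' j m (by omega)]; unfold lastD; rw [hlen']; simp
        rw [h1, h2] at this; omega
      simp only [CWF, Finset.mem_biUnion, Finset.mem_image, Finset.mem_range]
      exact ⟨w', hw', j, hj, rfl⟩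

/-- hockey stick -/
lemma sum_range_choose_eq (L r : ℕ) :
    ∑ j ∈ Finset.range L, j.choose r = L.choose (r + 1) := by
  induction L with
  | zero => simp
  | succ L ih => rw [Finset.sum_range_succ, ih, Nat.choose_succ_succ' L r]; omega

lemma sum_CWF_succ (n : ℕ) (f : List ℕ → ℕ) :
    ∑ w ∈ CWF (n + 2), f w
      = ∑ w ∈ CWF (n + 1), ∑ j ∈ Finset.range (lastD w + 2), f (w ++ [j]) := by
  show ∑ w ∈ (CWF (n+1)).biUnion
      (fun w => (Finset.range (lastD w + 2)).image (fun j => w ++ [j])), f w = _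
  rw [Finset.sum_biUnion]
  · apply Finset.sum_congr rfl
    intro w _
    rw [Finset.sum_image]
    intro j _ j' _ h
    simpa using h
  · intro a ha b hb hab
    simp only [Function.onFun]
    rw [Finset.disjoint_left]
    intro x hxa hxb
    simp only [Finset.mem_image, Finset.mem_range] at hxa hxb
    obtain ⟨j, _, rfl⟩ := hxa
    obtain ⟨j', _, hj'⟩ := hxb
    have hlen : b.length = a.length := by
      rw [length_of_mem_CWF _ _ ha, length_of_mem_CWF _ _ hb]
    exact hab ((List.append_inj' hj' rfl).1.symm)

/-- weighted sums: `∑ [runs w = k] * C(last w, r)` over Catalan words of length n. -/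
def Sg (n k r : ℕ) : ℕ :=
  ∑ w ∈ CWF n, if wAscRuns w = k then (lastD w).choose r else 0

lemma Sg_base (k r : ℕ) : Sg 1 k r = if k = 1 ∧ r = 0 then 1 else 0 := by
  unfold Sg
  show (if wAscRuns [0] = k then (lastD [0]).choose r else 0) = _
  have h1 : wAscRuns [0] = 1 := by simp [wAscRuns]
  have h2 : lastD [0] = 0 := rfl
  rw [h1, h2]
  rcases eq_or_ne k 1 with rfl | hk
  · rcases r with _ | r <;> simp
  · rw [if_neg (by omega : ¬ (1 = k)), if_neg (by simp [hk])]

lemma Sg_rec (n k r : ℕ) (hn : 1 ≤ n) :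
    Sg (n + 1) k r
      = 2 * Sg n k r + (if r = 0 then 0 else Sg n k (r - 1)) + Sg n (k - 1) (r + 1) := by
  obtain ⟨m, rfl⟩ : ∃ m, n = m + 1 := ⟨n - 1, by omega⟩
  unfold Sg
  rw [sum_CWF_succ]
  have hinner : ∀ w ∈ CWF (m + 1),
      (∑ j ∈ Finset.range (lastD w + 2),
        if wAscRuns (w ++ [j]) = k then (lastD (w ++ [j])).choose r else 0)
      = ((if wAscRuns w = k - 1 then (lastD w).choose (r + 1) else 0)
         + ((if wAscRuns w = k then (lastD w).choose r else 0)
         + (if wAscRuns w = k then (lastD w + 1).choose r else 0))) := by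
    intro w hw
    have hne : w ≠ [] := by
      intro h
      have := length_of_mem_CWF _ _ hw
      rw [h] at this; simp at this
    have hcongr : ∀ j, (if wAscRuns (w ++ [j]) = k then (lastD (w ++ [j])).choose r else 0)
        = (if wAscRuns w + (if j < lastD w then 1 else 0) = k then j.choose r else 0) := by
      intro j
      rw [wAscRuns_append w hne j, lastD_append]
    simp only [hcongr]
    rw [Finset.sum_range_succ, Finset.sum_range_succ]
    have e1 : ∀ j ∈ Finset.range (lastD w),
        (if wAscRuns w + (if j < lastD w then 1 else 0) = k then j.choose r else 0)
        = (if wAscRuns w + 1 = k then j.choose r else 0) := by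
      intro j hj
      simp only [Finset.mem_range] at hj
      rw [if_pos hj]
    rw [Finset.sum_congr rfl e1]
    have e2 : (∑ j ∈ Finset.range (lastD w), if wAscRuns w + 1 = k then j.choose r else 0)
        = (if wAscRuns w + 1 = k then (lastD w).choose (r+1) else 0) := by
      split
      · rw [sum_range_choose_eq]
      · simp
    rw [e2]
    have h3 : wAscRuns w + 1 = k ↔ wAscRuns w = k - 1 := by
      have := one_le_wAscRuns w; omega
    simp only [if_neg (lt_irrefl (lastD w)), if_neg (by omega : ¬ lastD w + 1 < lastD w),
      add_zero, h3]
    ring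
  rw [Finset.sum_congr rfl hinner]
  rw [Finset.sum_add_distrib, Finset.sum_add_distrib]
  have t1 : (∑ w ∈ CWF (m+1), if wAscRuns w = k - 1 then (lastD w).choose (r+1) else 0)
      = Sg (m+1) (k-1) (r+1) := rfl
  have t3 : (∑ w ∈ CWF (m+1), if wAscRuns w = k then (lastD w + 1).choose r else 0)
      = Sg (m+1) k r + (if r = 0 then 0 else Sg (m+1) k (r-1)) := by
    rcases r with _ | R
    · simp only [Nat.choose_zero_right, if_pos rfl, add_zero]
      unfold Sg
      simp
    · rw [if_neg (by omega : ¬ (R + 1 = 0))]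
      have hsplit : ∀ w : List ℕ,
          (if wAscRuns w = k then (lastD w + 1).choose (R+1) else 0)
          = (if wAscRuns w = k then (lastD w).choose (R+1) else 0)
            + (if wAscRuns w = k then (lastD w).choose R else 0) := by
        intro w
        rw [Nat.choose_succ_succ' (lastD w) R]
        split <;> omega
      rw [Finset.sum_congr rfl (fun w _ => hsplit w), Finset.sum_add_distrib]
      have : (R + 1 - 1) = R := rfl
      rw [this]
      rfl
  rw [t1, t3]
  unfold Sg
  ring

/-- ballot-type numbers: `cb k r = (r+1)/(2k-1+r) * C(2k-1+r, k-1)`. -/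
def cb : ℕ → ℕ → ℕ
  | 0, r => if r = 1 then 1 else 0
  | (k+1), r => ∑ j ∈ Finset.range (r + 1), cb k (j + 1)

lemma cb_zero (k : ℕ) : cb (k + 1) 0 = cb k 1 := by simp [cb]

lemma cb_succ (k r : ℕ) : cb (k + 1) (r + 1) = cb (k + 1) r + cb k (r + 2) := by
  show (∑ j ∈ Finset.range (r + 2), cb k (j + 1)) = _
  rw [Finset.sum_range_succ]
  rfl

lemma cb_one (r : ℕ) : cb 1 r = 1 := by
  induction r with
  | zero => rw [cb_zero]; rfl
  | succ r ih => rw [cb_succ, ih]; show 1 + (if False then 1 else 0) = 1; simp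

lemma cb_two (r : ℕ) : cb 2 r = r + 1 := by
  induction r with
  | zero => rw [cb_zero, cb_one]
  | succ r ih => rw [cb_succ, ih, cb_one]

/-- `cb (K+2) r = C(2K+2+r, K+1) - C(2K+2+r, K)`, in additive form. -/
lemma cval : ∀ K r, cb (K + 2) r + (2*K + 2 + r).choose K = (2*K + 2 + r).choose (K + 1) := by
  intro K
  induction K with
  | zero =>
    intro r
    rw [cb_two]
    have e1 : 2*0 + 2 + r = r + 2 := by ring
    rw [e1, Nat.choose_zero_right]
    have e2 : (r + 2).choose (0 + 1) = r + 2 := Nat.choose_one_right _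
    rw [e2]
  | succ K ihK =>
    intro r
    induction r with
    | zero =>
      have h1 := ihK 1
      have p1 : (2*(K+1) + 2 + 0).choose (K + 1)
          = (2*K + 3).choose K + (2*K + 3).choose (K + 1) := by
        have : 2*(K+1) + 2 + 0 = (2*K + 3) + 1 := by ring
        rw [this, Nat.choose_succ_succ' (2*K+3) K]
      have p2 : (2*(K+1) + 2 + 0).choose (K + 2)
          = (2*K + 3).choose (K+1) + (2*K + 3).choose (K + 2) := by
        have : 2*(K+1) + 2 + 0 = (2*K + 3) + 1 := by ring
        rw [this, Nat.choose_succ_succ' (2*K+3) (K+1)]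
      have psymm : (2*K + 3).choose (K + 2) = (2*K + 3).choose (K + 1) := by
        have h := Nat.choose_symm (show K + 1 ≤ 2*K + 3 by omega)
        have : 2*K + 3 - (K + 1) = K + 2 := by omega
        rw [this] at h
        exact h
      have hz : cb (K + 1 + 2) 0 = cb (K + 2) 1 := cb_zero _
      have h1' : cb (K + 2) 1 + (2*K + 2 + 1).choose K = (2*K + 2 + 1).choose (K + 1) := h1
      have e1 : 2*K + 2 + 1 = 2*K + 3 := by ring
      rw [e1] at h1'
      rw [hz]
      have efix : (2*(K+1) + 2 + 0).choose (K + 1 + 1) = (2*(K+1) + 2 + 0).choose (K + 2) := rfl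
      rw [efix]
      omega
    | succ r ihr =>
      have hs : cb (K + 1 + 2) (r + 1) = cb (K + 1 + 2) r + cb (K + 2) (r + 2) := cb_succ _ _
      have h2 := ihK (r + 2)
      have e2 : 2*K + 2 + (r + 2) = 2*K + 4 + r := by ring
      rw [e2] at h2
      have p1 : (2*(K+1) + 2 + (r+1)).choose (K + 1)
          = (2*K + 4 + r).choose K + (2*K + 4 + r).choose (K + 1) := by
        have : 2*(K+1) + 2 + (r+1) = (2*K + 4 + r) + 1 := by ring
        rw [this, Nat.choose_succ_succ' _ K]
      have p2 : (2*(K+1) + 2 + (r+1)).choose (K + 2)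
          = (2*K + 4 + r).choose (K+1) + (2*K + 4 + r).choose (K + 2) := by
        have : 2*(K+1) + 2 + (r+1) = (2*K + 4 + r) + 1 := by ring
        rw [this, Nat.choose_succ_succ' _ (K+1)]
      have e3 : 2*(K+1) + 2 + r = 2*K + 4 + r := by ring
      rw [e3] at ihr
      have efix : (2*(K+1) + 2 + (r+1)).choose (K + 1 + 1)
          = (2*(K+1) + 2 + (r+1)).choose (K + 2) := rfl
      rw [efix]
      have efix2 : (2*K + 4 + r).choose (K + 1 + 1) = (2*K + 4 + r).choose (K + 2) := rfl
      rw [efix2] at ihr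
      omega

/-- `k * cb k 0 = C(2k-2, k-1)` -/
lemma cb_mul (k : ℕ) (hk : 1 ≤ k) : k * cb k 0 = (2*k - 2).choose (k - 1) := by
  rcases k with _ | _ | K
  · omega
  · rw [cb_one]; simp
  · -- k = K + 2
    have h1 := cval K 0
    have e0 : 2*K + 2 + 0 = 2*K + 2 := by ring
    rw [e0] at h1
    set C0 := (2*K + 2).choose K with hC0
    set C1 := (2*K + 2).choose (K + 1) with hC1
    have h2 : (K + 2) * C0 = (K + 1) * C1 := by
      have hq := Nat.choose_succ_right_eq (2*K + 2) (K + 1)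
      -- C(2K+2, K+2) * (K+2) = C(2K+2, K+1) * (2K+2 - (K+1))
      have hsymm2 : (2*K + 2).choose (K + 2) = C0 := by
        have h := Nat.choose_symm (show K + 2 ≤ 2*K + 2 by omega)
        have : 2*K + 2 - (K + 2) = K := by omega
        rw [this] at h
        exact h.symm
      rw [hsymm2] at hq
      have : 2*K + 2 - (K + 1) = K + 1 := by omega
      rw [this] at hq
      -- hq : C0 * (K+2) = C1 * (K+1)
      rw [Nat.mul_comm (K+2) C0, Nat.mul_comm (K+1) C1]
      exact hq
    have h3 : (K + 2) * cb (K + 2) 0 + (K + 2) * C0 = (K + 2) * C1 := by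
      rw [← Nat.mul_add, h1]
    have e1 : 2*(K+2) - 2 = 2*K + 2 := by omega
    have e2 : K + 2 - 1 = K + 1 := by omega
    rw [e1, e2]
    -- goal : (K+2) * cb (K+2) 0 = C1
    have h4 : (K + 2) * C1 = (K + 1) * C1 + C1 := by ring
    show (K + 2) * cb (K + 2) 0 = C1
    linarith

/-- closed form for the moments. -/
def cf (n k r : ℕ) : ℕ :=
  if k = 0 then 0
  else if 2*k + r ≤ n + 1 then cb k r * (n-1).choose (2*k + r - 2) * 2^(n + 1 - 2*k - r)
  else 0

lemma cf_k0 (n r : ℕ) : cf n 0 r = 0 := by simp [cf]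

lemma cf_eval {n k r : ℕ} (hk : k ≠ 0) (hg : 2*k + r ≤ n + 1) :
    cf n k r = cb k r * (n-1).choose (2*k + r - 2) * 2^(n + 1 - 2*k - r) := by
  unfold cf
  rw [if_neg hk, if_pos hg]

lemma cf_of_gt {n k r : ℕ} (hg : ¬ (2*k + r ≤ n + 1)) : cf n k r = 0 := by
  simp [cf, hg]

lemma cf_rec (n k r : ℕ) (hn : 1 ≤ n) :
    cf (n + 1) k r
      = 2 * cf n k r + (if r = 0 then 0 else cf n k (r - 1)) + cf n (k - 1) (r + 1) := by
  rcases k with _ | K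
  · simp [cf]
  simp only [Nat.add_sub_cancel]
  rcases Nat.lt_or_ge (n + 1) (2*(K+1) + r) with hg | hg
  · rcases Nat.lt_or_ge (n + 2) (2*(K+1) + r) with hg2 | hg2
    · -- case C : everything vanishes
      rw [cf_of_gt (by omega), cf_of_gt (by omega)]
      have h3 : cf n K (r + 1) = 0 := cf_of_gt (by omega)
      rw [h3]
      rcases r with _ | R
      · simp
      · rw [cf_of_gt (by omega)]
        simp
    · -- case B : 2*(K+1) + r = n + 2
      have hB : 2*(K+1) + r = n + 2 := by omega
      rcases r with _ | R
      · -- r = 0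
        rcases K with _ | J
        · omega
        · have h1 : cf (n+1) (J+2) 0 = cb (J+2) 0 := by
            rw [cf_eval (by omega) (by omega)]
            have e1 : 2*(J+2) + 0 - 2 = n := by omega
            have e2 : n + 1 - 1 = n := by omega
            have e3 : n + 1 + 1 - 2*(J+2) - 0 = 0 := by omega
            rw [e1, e2, e3, Nat.choose_self, pow_zero, mul_one, mul_one]
          have h2 : cf n (J+2) 0 = 0 := cf_of_gt (by omega)
          have h3 : cf n (J+1) 1 = cb (J+1) 1 := by
            rw [cf_eval (by omega) (by omega)]
            have e1 : 2*(J+1) + 1 - 2 = n - 1 := by omega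
            have e2 : n + 1 - 2*(J+1) - 1 = 0 := by omega
            rw [e1, e2, Nat.choose_self, pow_zero, mul_one, mul_one]
          rw [h1, h2, h3]
          have hcz : cb (J+2) 0 = cb (J+1) 1 := cb_zero (J+1)
          simp [hcz]
      · -- r = R + 1
        have h1 : cf (n+1) (K+1) (R+1) = cb (K+1) (R+1) := by
          rw [cf_eval (by omega) (by omega)]
          have e1 : 2*(K+1) + (R+1) - 2 = n := by omega
          have e2 : n + 1 - 1 = n := by omega
          have e3 : n + 1 + 1 - 2*(K+1) - (R+1) = 0 := by omega
          rw [e1, e2, e3, Nat.choose_self, pow_zero, mul_one, mul_one]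
        have h2 : cf n (K+1) (R+1) = 0 := cf_of_gt (by omega)
        have h3 : cf n (K+1) R = cb (K+1) R := by
          rw [cf_eval (by omega) (by omega)]
          have e1 : 2*(K+1) + R - 2 = n - 1 := by omega
          have e2 : n + 1 - 2*(K+1) - R = 0 := by omega
          rw [e1, e2, Nat.choose_self, pow_zero, mul_one, mul_one]
        have h4 : cf n K (R+1+1) = cb K (R+2) := by
          rcases K with _ | J
          · rw [cf_k0]
            show (0:ℕ) = cb 0 (R+2)
            simp [cb]
          · rw [cf_eval (by omega) (by omega)]
            have e1 : 2*(J+1) + (R+1+1) - 2 = n - 1 := by omega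
            have e2 : n + 1 - 2*(J+1) - (R+1+1) = 0 := by omega
            rw [e1, e2, Nat.choose_self, pow_zero, mul_one, mul_one]
        rw [h1, h2, if_neg (by omega : ¬ (R + 1 = 0)), Nat.add_sub_cancel, h3, h4]
        have := cb_succ K R
        omega
  · -- case A : 2*(K+1) + r ≤ n + 1
    obtain ⟨s, hs⟩ : ∃ s, n + 1 = 2*(K+1) + r + s := ⟨n + 1 - (2*(K+1) + r), by omega⟩
    obtain ⟨N, rfl⟩ : ∃ N, n = N + 1 := ⟨n - 1, by omega⟩
    rcases r with _ | R
    · rcases K with _ | J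
      · -- k = 1, r = 0
        have h1 : cf (N+2) 1 0 = 2^(N+1) := by
          rw [cf_eval (by omega) (by omega)]
          have e1 : 2*1 + 0 - 2 = 0 := by omega
          have e2 : N + 2 + 1 - 2*1 - 0 = N + 1 := by omega
          rw [e1, e2, Nat.choose_zero_right, cb_one]
          ring
        have h2 : cf (N+1) 1 0 = 2^N := by
          rw [cf_eval (by omega) (by omega)]
          have e1 : 2*1 + 0 - 2 = 0 := by omega
          have e2 : N + 1 + 1 - 2*1 - 0 = N := by omega
          rw [e1, e2, Nat.choose_zero_right, cb_one]
          ring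
        have h3 : cf (N+1) 0 1 = 0 := cf_k0 _ _
        rw [show (0:ℕ) + 1 = 1 from rfl] at *
        rw [h1, h2, h3]
        simp only [if_pos trivial, add_zero]
        rw [pow_succ]
        ring
      · -- k = J + 2, r = 0
        have h1 : cf (N+2) (J+2) 0 = cb (J+2) 0 * (N+1).choose (2*J+2) * 2^(s+1) := by
          rw [cf_eval (by omega) (by omega)]
          have e1 : 2*(J+2) + 0 - 2 = 2*J + 2 := by omega
          have e2 : N + 2 - 1 = N + 1 := by omega
          have e3 : N + 2 + 1 - 2*(J+2) - 0 = s + 1 := by omega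
          rw [e1, e2, e3]
        have h2 : cf (N+1) (J+2) 0 = cb (J+2) 0 * N.choose (2*J+2) * 2^s := by
          rw [cf_eval (by omega) (by omega)]
          have e1 : 2*(J+2) + 0 - 2 = 2*J + 2 := by omega
          have e2 : N + 1 - 1 = N := by omega
          have e3 : N + 1 + 1 - 2*(J+2) - 0 = s := by omega
          rw [e1, e2, e3]
        have h3 : cf (N+1) (J+1) 1 = cb (J+1) 1 * N.choose (2*J+1) * 2^(s+1) := by
          rw [cf_eval (by omega) (by omega)]
          have e1 : 2*(J+1) + 1 - 2 = 2*J + 1 := by omega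
          have e2 : N + 1 - 1 = N := by omega
          have e3 : N + 1 + 1 - 2*(J+1) - 1 = s + 1 := by omega
          rw [e1, e2, e3]
        have ep : (N+1).choose (2*J+2) = N.choose (2*J+1) + N.choose (2*J+2) := by
          have h := Nat.choose_succ_succ' N (2*J+1)
          have e : 2*J + 1 + 1 = 2*J + 2 := rfl
          rw [e] at h
          exact h
        have hcz : cb (J+2) 0 = cb (J+1) 1 := cb_zero (J+1)
        rw [show J + 1 + 1 = J + 2 from rfl] at *
        rw [h1, h2, h3, ep, hcz]
        simp only [if_pos trivial]
        rw [pow_succ]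
        ring
    · -- r = R + 1, K arbitrary
      have h1 : cf (N+2) (K+1) (R+1)
          = cb (K+1) (R+1) * (N+1).choose (2*K+R+1) * 2^(s+1) := by
        rw [cf_eval (by omega) (by omega)]
        have e1 : 2*(K+1) + (R+1) - 2 = 2*K + R + 1 := by omega
        have e2 : N + 2 - 1 = N + 1 := by omega
        have e3 : N + 2 + 1 - 2*(K+1) - (R+1) = s + 1 := by omega
        rw [e1, e2, e3]
      have h2 : cf (N+1) (K+1) (R+1) = cb (K+1) (R+1) * N.choose (2*K+R+1) * 2^s := by
        rw [cf_eval (by omega) (by omega)]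
        have e1 : 2*(K+1) + (R+1) - 2 = 2*K + R + 1 := by omega
        have e2 : N + 1 - 1 = N := by omega
        have e3 : N + 1 + 1 - 2*(K+1) - (R+1) = s := by omega
        rw [e1, e2, e3]
      have h3 : cf (N+1) (K+1) R = cb (K+1) R * N.choose (2*K+R) * 2^(s+1) := by
        rw [cf_eval (by omega) (by omega)]
        have e1 : 2*(K+1) + R - 2 = 2*K + R := by omega
        have e2 : N + 1 - 1 = N := by omega
        have e3 : N + 1 + 1 - 2*(K+1) - R = s + 1 := by omega
        rw [e1, e2, e3]
      have h4 : cf (N+1) K (R+1+1) = cb K (R+2) * N.choose (2*K+R) * 2^(s+1) := by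
        rcases K with _ | J
        · rw [cf_k0]
          have : cb 0 (R+2) = 0 := by simp [cb]
          rw [this, zero_mul, zero_mul]
        · rw [cf_eval (by omega) (by omega)]
          have e1 : 2*(J+1) + (R+1+1) - 2 = 2*(J+1) + R := by omega
          have e2 : N + 1 - 1 = N := by omega
          have e3 : N + 1 + 1 - 2*(J+1) - (R+1+1) = s + 1 := by omega
          rw [e1, e2, e3]
      have ep : (N+1).choose (2*K+R+1) = N.choose (2*K+R) + N.choose (2*K+R+1) :=
        Nat.choose_succ_succ' N (2*K+R)
      have ecb : cb (K+1) (R+1) = cb (K+1) R + cb K (R+2) := cb_succ K R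
      rw [h1, h2, if_neg (by omega : ¬ (R + 1 = 0)), Nat.add_sub_cancel, h3, h4, ep, ecb]
      ring

lemma Sg_eq : ∀ n, 1 ≤ n → ∀ k r, Sg n k r = cf n k r := by
  intro n hn
  induction n, hn using Nat.le_induction with
  | base =>
    intro k r
    rw [Sg_base]
    rcases k with _ | K
    · rw [cf_k0]; simp
    rcases eq_or_ne (K+1) 1 with h1 | h1
    · rw [h1]
      rcases r with _ | R
      · rw [if_pos ⟨rfl, rfl⟩, cf_eval (by omega) (by omega)]
        simp [cb_one]
      · rw [if_neg (by omega), cf_of_gt (by omega)]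
    · rw [if_neg (by omega), cf_of_gt (by omega)]
  | succ n hn ih =>
    intro k r
    rw [Sg_rec n k r hn, cf_rec n k r hn, ih, ih, ih]

/-- subcommittee identity -/
lemma choose_mul_choose (N K J : ℕ) (hJ : J ≤ K) (hK : K ≤ N) :
    N.choose K * K.choose J = N.choose J * (N - J).choose (K - J) := by
  have h1 := Nat.choose_mul_factorial_mul_factorial hK
  have h2 := Nat.choose_mul_factorial_mul_factorial hJ
  have h3 := Nat.choose_mul_factorial_mul_factorial (le_trans hJ hK)
  have h4 := Nat.choose_mul_factorial_mul_factorial (show K - J ≤ N - J by omega)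
  have h5 : N - J - (K - J) = N - K := by omega
  rw [h5] at h4
  have hpos : 0 < (Nat.factorial J) * (Nat.factorial (K - J)) * (Nat.factorial (N - K)) :=
    Nat.mul_pos (Nat.mul_pos (Nat.factorial_pos _) (Nat.factorial_pos _)) (Nat.factorial_pos _)
  apply Nat.eq_of_mul_eq_mul_right hpos
  calc N.choose K * K.choose J * (J.factorial * (K - J).factorial * (N - K).factorial)
      = (K.choose J * J.factorial * (K - J).factorial) * (N.choose K) * (N - K).factorial := by
        ring
    _ = Nat.factorial K * N.choose K * (N - K).factorial := by rw [h2]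
    _ = N.choose K * Nat.factorial K * (N - K).factorial := by ring
    _ = Nat.factorial N := h1
    _ = N.choose J * Nat.factorial J * (N - J).factorial := h3.symm
    _ = N.choose J * Nat.factorial J * ((N - J).choose (K - J) * (K - J).factorial
          * (N - K).factorial) := by rw [h4]
    _ = N.choose J * (N - J).choose (K - J)
          * (J.factorial * (K - J).factorial * (N - K).factorial) := by ring

/-- the final binomial identity -/
lemma key_identity (n k : ℕ) (hk : 1 ≤ k) (h : 2*k ≤ n + 1) :
    n * cb k 0 * (n - 1).choose (2*k - 2) = n.choose k * (n - k).choose (k - 1) := by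
  have hn : 1 ≤ n := by omega
  apply Nat.eq_of_mul_eq_mul_left (show 0 < k by omega)
  have hc : k * cb k 0 = (2*k - 2).choose (k - 1) := cb_mul k hk
  have hkch : k * n.choose k = n * (n-1).choose (k-1) := by
    obtain ⟨m, rfl⟩ : ∃ m, n = m + 1 := ⟨n - 1, by omega⟩
    obtain ⟨j, rfl⟩ : ∃ j, k = j + 1 := ⟨k - 1, by omega⟩
    have hsm := Nat.add_one_mul_choose_eq m j
    simp only [Nat.add_sub_cancel]
    rw [hsm]
    ring
  have hsub : (n-1).choose (2*k - 2) * (2*k - 2).choose (k - 1)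
      = (n-1).choose (k-1) * (n - k).choose (k - 1) := by
    have h1 := choose_mul_choose (n-1) (2*k - 2) (k-1) (by omega) (by omega)
    have e1 : n - 1 - (k - 1) = n - k := by omega
    have e2 : 2*k - 2 - (k - 1) = k - 1 := by omega
    rw [e1, e2] at h1
    exact h1
  calc k * (n * cb k 0 * (n-1).choose (2*k - 2))
      = (k * cb k 0) * n * (n-1).choose (2*k - 2) := by ring
    _ = (2*k - 2).choose (k - 1) * n * (n-1).choose (2*k - 2) := by rw [hc]
    _ = n * ((n-1).choose (2*k - 2) * (2*k - 2).choose (k - 1)) := by ring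
    _ = n * ((n-1).choose (k-1) * (n - k).choose (k - 1)) := by rw [hsub]
    _ = (n * (n-1).choose (k-1)) * (n - k).choose (k - 1) := by ring
    _ = (k * n.choose k) * (n - k).choose (k - 1) := by rw [hkch]
    _ = k * (n.choose k * (n - k).choose (k - 1)) := by ring

/-- The number `w(n,k)` of Catalan words of length `n` with exactly `k` runs of weak
ascents satisfies `n · w(n,k) = C(n,k) C(n-k,k-1) 2^(n-2k+1)` when `2k ≤ n+1`, and
`w(n,k) = 0` when `2k > n+1`. -/
theorem wAscRuns_count_formula (n k : ℕ) (hn : 1 ≤ n) (hk : 1 ≤ k) :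
    (2 * k ≤ n + 1 →
      n * Nat.card {w : List ℕ | w ∈ CatalanWord n ∧ wAscRuns w = k} =
        Nat.choose n k * Nat.choose (n - k) (k - 1) * 2 ^ (n + 1 - 2 * k)) ∧
    (n + 1 < 2 * k →
      Nat.card {w : List ℕ | w ∈ CatalanWord n ∧ wAscRuns w = k} = 0) := by
  have hset : {w : List ℕ | w ∈ CatalanWord n ∧ wAscRuns w = k}
      = ↑((CWF n).filter (fun w => wAscRuns w = k)) := by
    ext w
    simp only [Set.mem_setOf_eq, Finset.coe_filter, mem_CWF_iff n hn w]
  have hcard : Nat.card {w : List ℕ | w ∈ CatalanWord n ∧ wAscRuns w = k}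
      = Sg n k 0 := by
    rw [hset, Nat.card_coe_set_eq, Set.ncard_coe_finset, Finset.card_filter]
    unfold Sg
    apply Finset.sum_congr rfl
    intro w _
    simp
  constructor
  · intro hg
    rw [hcard, Sg_eq n hn k 0, cf_eval (by omega) (by omega)]
    have e1 : 2*k + 0 - 2 = 2*k - 2 := by omega
    have e2 : n + 1 - 2*k - 0 = n + 1 - 2*k := by omega
    rw [e1, e2]
    calc n * (cb k 0 * (n-1).choose (2*k - 2) * 2^(n + 1 - 2*k))
        = (n * cb k 0 * (n-1).choose (2*k - 2)) * 2^(n + 1 - 2*k) := by ring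
      _ = (n.choose k * (n - k).choose (k - 1)) * 2^(n + 1 - 2*k) := by
          rw [key_identity n k hk (by omega)]
  · intro hg
    rw [hcard, Sg_eq n hn k 0, cf_of_gt (by omega)]
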